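/- There exists a unique x* ∈ D such that H(x*) ≥ H(x) for every x ∈ D; that is, the constrained maximization of the potential function H over the feasible set D admits a unique solution. -/

import Mathlib

open Real Set Finset

/-- The constrained maximization of the potential `H` over the feasible set `D`
admits a unique solution. -/
theorem potential_has_unique_maximizer
    (N : ℕ) (hN : 0 < N) (μ r : ℝ) (hμ : 0 < μ) (hr : 0 < r)
    (w : Fin N → ℝ) (hw : ∀ i, 0 < w i)
    (D : Set (Fin N → ℝ)) (hD : D = {x | (∀ i, x i ≥ 0) ∧ (∑ i, x i) < μ})
    (H : (Fin N → ℝ) → ℝ)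
    (hH : ∀ x, H x = (∑ i, w i * Real.log (1 + x i)) - r * (∑ i, x i)
        - 1 / (μ - ∑ i, x i)) :
    ∃! xstar, xstar ∈ D ∧ ∀ x ∈ D, H x ≤ H xstar := by
  subst hD
  set D : Set (Fin N → ℝ) := {x | (∀ i, x i ≥ 0) ∧ (∑ i, x i) < μ} with hDdef
  -- convexity of D
  have hlin : IsLinearMap ℝ (fun x : Fin N → ℝ => ∑ i, x i) :=
    ⟨fun x y => Finset.sum_add_distrib, fun c x => by simp [Finset.mul_sum]⟩
  have hDconv : Convex ℝ D := by
    have h1 : Convex ℝ {x : Fin N → ℝ | ∑ i, x i < μ} := convex_halfSpace_lt hlin μ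
    have h2 : Convex ℝ {x : Fin N → ℝ | ∀ i, x i ≥ 0} := by
      have he : {x : Fin N → ℝ | ∀ i, x i ≥ 0} = ⋂ i, {x | x i ≥ 0} := by
        ext x; simp
      rw [he]
      exact convex_iInter fun i =>
        convex_halfSpace_ge ⟨fun a b => rfl, fun c a => rfl⟩ 0
    have he : D = {x : Fin N → ℝ | ∀ i, x i ≥ 0} ∩ {x : Fin N → ℝ | ∑ i, x i < μ} := by
      ext x; exact ⟨fun h => ⟨h.1, h.2⟩, fun h => ⟨h.1, h.2⟩⟩
    rw [he]; exact h2.inter h1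
  -- strict concavity of H on D
  have hSC : StrictConcaveOn ℝ D H := by
    refine ⟨hDconv, ?_⟩
    intro x hx y hy hxy a b ha hb hab
    have hS : ∑ i, (a • x + b • y) i = a * ∑ i, x i + b * ∑ i, y i := by
      simp [Pi.add_apply, Pi.smul_apply, smul_eq_mul, Finset.mul_sum,
        Finset.sum_add_distrib]
    have per : ∀ i, a * (w i * Real.log (1 + x i)) + b * (w i * Real.log (1 + y i))
        ≤ w i * Real.log (1 + (a • x + b • y) i) := by
      intro i
      have h1 : (0:ℝ) < 1 + x i := by have := hx.1 i; linarith
      have h2 : (0:ℝ) < 1 + y i := by have := hy.1 i; linarith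
      have hcc := strictConcaveOn_log_Ioi.concaveOn.2 (Set.mem_Ioi.mpr h1)
        (Set.mem_Ioi.mpr h2) ha.le hb.le hab
      simp only [smul_eq_mul] at hcc
      have heq : a * (1 + x i) + b * (1 + y i) = 1 + (a * x i + b * y i) := by
        have : a * (1 + x i) + b * (1 + y i) = (a + b) + (a * x i + b * y i) := by ring
        rw [this, hab]
      rw [heq] at hcc
      have hxy' : (a • x + b • y) i = a * x i + b * y i := by
        simp [Pi.add_apply, Pi.smul_apply, smul_eq_mul]
      rw [hxy']
      calc a * (w i * Real.log (1 + x i)) + b * (w i * Real.log (1 + y i))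
          = w i * (a * Real.log (1 + x i) + b * Real.log (1 + y i)) := by ring
        _ ≤ w i * Real.log (1 + (a * x i + b * y i)) :=
            mul_le_mul_of_nonneg_left hcc (hw i).le
    obtain ⟨i0, hi0⟩ := Function.ne_iff.mp hxy
    have strict : a * (w i0 * Real.log (1 + x i0)) + b * (w i0 * Real.log (1 + y i0))
        < w i0 * Real.log (1 + (a • x + b • y) i0) := by
      have h1 : (0:ℝ) < 1 + x i0 := by have := hx.1 i0; linarith
      have h2 : (0:ℝ) < 1 + y i0 := by have := hy.1 i0; linarith
      have hne : (1 + x i0 : ℝ) ≠ 1 + y i0 := fun h => hi0 (by linarith)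
      have hcc := strictConcaveOn_log_Ioi.2 (Set.mem_Ioi.mpr h1)
        (Set.mem_Ioi.mpr h2) hne ha hb hab
      simp only [smul_eq_mul] at hcc
      have heq : a * (1 + x i0) + b * (1 + y i0) = 1 + (a * x i0 + b * y i0) := by
        have : a * (1 + x i0) + b * (1 + y i0) = (a + b) + (a * x i0 + b * y i0) := by ring
        rw [this, hab]
      rw [heq] at hcc
      have hxy' : (a • x + b • y) i0 = a * x i0 + b * y i0 := by
        simp [Pi.add_apply, Pi.smul_apply, smul_eq_mul]
      rw [hxy']
      calc a * (w i0 * Real.log (1 + x i0)) + b * (w i0 * Real.log (1 + y i0))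
          = w i0 * (a * Real.log (1 + x i0) + b * Real.log (1 + y i0)) := by ring
        _ < w i0 * Real.log (1 + (a * x i0 + b * y i0)) :=
            (mul_lt_mul_iff_right₀ (hw i0)).mpr hcc
    have hlogs : a * (∑ i, w i * Real.log (1 + x i)) + b * (∑ i, w i * Real.log (1 + y i))
        < ∑ i, w i * Real.log (1 + (a • x + b • y) i) := by
      rw [Finset.mul_sum, Finset.mul_sum, ← Finset.sum_add_distrib]
      exact Finset.sum_lt_sum (fun i _ => per i) ⟨i0, Finset.mem_univ i0, strict⟩
    set X := ∑ i, x i with hX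
    set Y := ∑ i, y i with hY
    have hu : 0 < μ - X := by have := hx.2; linarith
    have hv : 0 < μ - Y := by have := hy.2; linarith
    have habμ : a * μ + b * μ = μ := by rw [← add_mul, hab, one_mul]
    have h3 : 0 < μ - (a * X + b * Y) := by
      nlinarith [mul_pos ha hu, mul_pos hb hv]
    have key : 1 / (μ - (a * X + b * Y)) ≤ a / (μ - X) + b / (μ - Y) := by
      rw [div_add_div _ _ hu.ne' hv.ne', div_le_div_iff₀ h3 (mul_pos hu hv)]
      have hb1 : b = 1 - a := by linarith
      subst hb1
      nlinarith [mul_nonneg (mul_nonneg ha.le (by linarith : (0:ℝ) ≤ 1 - a)) (sq_nonneg (X - Y))]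
    have haX : a / (μ - X) = a * (1 / (μ - X)) := by ring
    have hbY : b / (μ - Y) = b * (1 / (μ - Y)) := by ring
    rw [haX, hbY] at key
    simp only [smul_eq_mul]
    rw [hH x, hH y, hH (a • x + b • y), hS]
    nlinarith [hlogs, key]
  -- existence via compactness
  have hNe : Nonempty (Fin N) := ⟨⟨0, hN⟩⟩
  set W := ∑ i, w i with hWdef
  have hW : 0 < W := Finset.sum_pos (fun i _ => hw i) Finset.univ_nonempty
  have hlpos : 0 < Real.log (1 + μ) := Real.log_pos (by linarith)
  set C := W * Real.log (1 + μ) + 1 / μ + 1 with hCdef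
  have hμinv : 0 < 1 / μ := by positivity
  have hC : 0 < C := by rw [hCdef]; nlinarith [mul_pos hW hlpos]
  have hCinv : 0 < 1 / C := by positivity
  have hμC : 1 / μ < C := by rw [hCdef]; nlinarith [mul_pos hW hlpos]
  have hCμ : 1 / C < μ := by
    rw [div_lt_iff₀ hC]
    rw [div_lt_iff₀ hμ] at hμC
    nlinarith
  set K := {x : Fin N → ℝ | (∀ i, 0 ≤ x i) ∧ ∑ i, x i ≤ μ - 1 / C} with hKdef
  have h0K : (0 : Fin N → ℝ) ∈ K := by
    refine ⟨fun i => le_refl 0, ?_⟩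
    simp only [Pi.zero_apply, Finset.sum_const_zero]
    linarith
  have hKD : K ⊆ D := fun x hx => ⟨fun i => hx.1 i, by have := hx.2; linarith⟩
  have hH0 : H 0 = -(1 / μ) := by
    rw [hH 0]
    simp [Real.log_one]
  have claim : ∀ x ∈ D, H 0 < H x → x ∈ K := by
    intro x hxD hgt
    have hd : 0 < μ - ∑ i, x i := by have := hxD.2; linarith
    have hxiμ : ∀ i, x i ≤ μ := fun i =>
      le_trans (Finset.single_le_sum (fun j _ => hxD.1 j) (Finset.mem_univ i)) hxD.2.le
    have hsum_le : ∑ i, w i * Real.log (1 + x i) ≤ W * Real.log (1 + μ) := by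
      rw [hWdef, Finset.sum_mul]
      refine Finset.sum_le_sum fun i _ => ?_
      refine mul_le_mul_of_nonneg_left ?_ (hw i).le
      exact Real.log_le_log (by have := hxD.1 i; linarith) (by linarith [hxiμ i])
    have hS0 : 0 ≤ ∑ i, x i := Finset.sum_nonneg fun i _ => hxD.1 i
    have hrS : 0 ≤ r * ∑ i, x i := mul_nonneg hr.le hS0
    rw [hH0, hH x] at hgt
    have h1 : 1 / (μ - ∑ i, x i) ≤ C := by
      rw [hCdef]; linarith
    have h2 : 1 ≤ C * (μ - ∑ i, x i) := by
      rw [div_le_iff₀ hd] at h1; linarith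
    have h3 : 1 / C ≤ μ - ∑ i, x i := by
      rw [div_le_iff₀ hC]; linarith
    exact ⟨fun i => hxD.1 i, by linarith⟩
  have hKcl : IsClosed K := by
    have h1 : IsClosed {x : Fin N → ℝ | ∀ i, 0 ≤ x i} := by
      have he : {x : Fin N → ℝ | ∀ i, 0 ≤ x i} = ⋂ i, {x | 0 ≤ x i} := by ext x; simp
      rw [he]
      exact isClosed_iInter fun i => isClosed_le continuous_const (continuous_apply i)
    have h2 : IsClosed {x : Fin N → ℝ | ∑ i, x i ≤ μ - 1 / C} :=
      isClosed_le (continuous_finset_sum _ fun i _ => continuous_apply i) continuous_const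
    have he : K = {x : Fin N → ℝ | ∀ i, 0 ≤ x i} ∩ {x : Fin N → ℝ | ∑ i, x i ≤ μ - 1 / C} := by
      ext x; simp [hKdef, Set.mem_setOf_eq]
    rw [he]; exact h1.inter h2
  have hKsub : K ⊆ Set.Icc (0 : Fin N → ℝ) (fun _ => μ) := by
    intro x hx
    refine ⟨fun i => hx.1 i, fun i => ?_⟩
    have := le_trans (Finset.single_le_sum (fun j _ => hx.1 j) (Finset.mem_univ i)) hx.2
    simp only
    linarith
  have hKc : IsCompact K := IsCompact.of_isClosed_subset isCompact_Icc hKcl hKsub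
  have hHcont : ContinuousOn H K := by
    have hc : ContinuousOn (fun x : Fin N → ℝ =>
        (∑ i, w i * Real.log (1 + x i)) - r * (∑ i, x i) - 1 / (μ - ∑ i, x i)) K := by
      apply ContinuousOn.sub
      apply ContinuousOn.sub
      · refine continuousOn_finset_sum _ fun i _ => continuousOn_const.mul ?_
        refine ContinuousOn.log ((continuous_const.add (continuous_apply i)).continuousOn)
          fun x hx => ?_
        have := hx.1 i; positivity
      · exact (continuous_const.mul
          (continuous_finset_sum _ fun i _ => continuous_apply i)).continuousOn
      · refine ContinuousOn.div continuousOn_const ((continuous_const.sub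
          (continuous_finset_sum _ fun i _ => continuous_apply i)).continuousOn)
          fun x hx => ?_
        have := hx.2
        have : 0 < μ - ∑ i, x i := by linarith [hx.2, hCinv]
        exact this.ne'
    exact hc.congr fun x _ => hH x
  obtain ⟨xs, hxsK, hmaxK⟩ := hKc.exists_isMaxOn ⟨0, h0K⟩ hHcont
  have hxsD : xs ∈ D := hKD hxsK
  have hmaxD : ∀ x ∈ D, H x ≤ H xs := by
    intro x hxD
    by_cases hc : H x ≤ H 0
    · exact le_trans hc (hmaxK h0K)
    · exact hmaxK (claim x hxD (lt_of_not_ge hc))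
  refine ⟨xs, ⟨hxsD, hmaxD⟩, ?_⟩
  rintro y ⟨hyD, hymax⟩
  exact hSC.eq_of_isMaxOn (isMaxOn_iff.mpr hymax) (isMaxOn_iff.mpr hmaxD) hyD hxsD
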